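/- Let η ∈ (0,1) and k ≥ 1 be an integer, define p_u = η/((k+1)η + 1) for 0 ≤ u ≤ k−1 and p_k = (1+η)/((k+1)η + 1), and let f_0, …, f_k be nonnegative reals with Σ_{v=0}^{k} f_v ≤ 1. Then Σ_{u=0}^{k} p_u · Σ_{v=0}^{u} f_v·(1−η)^{u−v} ≤ (1+η)/((k+1)η + 1). -/

import Mathlib

/-- Let `η ∈ (0,1)`, `k ≥ 1`, let `p u = η/((k+1)η + 1)` for `u < k`
and `p k = (1+η)/((k+1)η + 1)`, and let `f 0, …, f k` be nonnegative reals summing to at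
most `1`.  Then `Σ_{u=0}^{k} p u · Σ_{v=0}^{u} f v · (1-η)^(u-v) ≤ (1+η)/((k+1)η + 1)`. -/
theorem expected_inverse_competitive_ratio (η : ℝ) (hη0 : 0 < η) (hη1 : η < 1)
    (k : ℕ) (hk : 1 ≤ k) (p : ℕ → ℝ)
    (hpu : ∀ u, u < k → p u = η / (((k : ℝ) + 1) * η + 1))
    (hpk : p k = (1 + η) / (((k : ℝ) + 1) * η + 1))
    (f : ℕ → ℝ) (hf0 : ∀ v, v ≤ k → 0 ≤ f v)
    (hf1 : ∑ v ∈ Finset.range (k + 1), f v ≤ 1) :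
    ∑ u ∈ Finset.range (k + 1), p u * ∑ v ∈ Finset.range (u + 1), f v * (1 - η) ^ (u - v) ≤
      (1 + η) / (((k : ℝ) + 1) * η + 1) := by
  set D : ℝ := ((k : ℝ) + 1) * η + 1 with hD
  have hDpos : 0 < D := by positivity
  have hx0 : (0:ℝ) ≤ 1 - η := by linarith
  have hx1 : 1 - η ≤ 1 := by linarith
  -- swap the order of summation
  have hswap :
      ∑ u ∈ Finset.range (k + 1), p u * ∑ v ∈ Finset.range (u + 1), f v * (1 - η) ^ (u - v) =
      ∑ v ∈ Finset.range (k + 1), ∑ u ∈ Finset.Ico v (k + 1),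
        p u * (f v * (1 - η) ^ (u - v)) := by
    simp_rw [Finset.mul_sum]
    have := (Finset.sum_Ico_Ico_comm 0 (k+1) (fun v u => p u * (f v * (1 - η) ^ (u - v)))).symm
    simp only [Nat.Ico_zero_eq_range] at this
    exact this
  rw [hswap]
  -- bound each inner sum
  have hbound : ∀ v ∈ Finset.range (k + 1),
      ∑ u ∈ Finset.Ico v (k + 1), p u * (f v * (1 - η) ^ (u - v)) ≤ f v * ((1 + η) / D) := by
    intro v hv
    have hvk : v ≤ k := Nat.lt_succ_iff.mp (Finset.mem_range.mp hv)
    have hfv : 0 ≤ f v := hf0 v hvk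
    -- compute the coefficient
    have hcoef : ∑ u ∈ Finset.Ico v (k + 1), p u * (1 - η) ^ (u - v)
        = (1 + η * (1 - η) ^ (k - v)) / D := by
      rw [Finset.sum_Ico_succ_top (Nat.lt_succ_iff.mp (Finset.mem_range.mp hv))]
      have h1 : ∑ u ∈ Finset.Ico v k, p u * (1 - η) ^ (u - v)
          = (η / D) * ∑ j ∈ Finset.range (k - v), (1 - η) ^ j := by
        rw [Finset.mul_sum, Finset.sum_Ico_eq_sum_range]
        refine Finset.sum_congr rfl fun j hj => ?_
        have hj' : v + j < k := by
          have := Finset.mem_range.mp hj; omega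
        rw [hpu _ hj', Nat.add_sub_cancel_left]
      have hgeom : ∑ j ∈ Finset.range (k - v), (1 - η) ^ j
          = ((1 - η) ^ (k - v) - 1) / (1 - η - 1) := geom_sum_eq (by intro h; nlinarith) _
      rw [h1, hgeom, hpk]
      field_simp
      rw [show (1 - η - 1) = -η by ring, div_neg, mul_div_cancel_left₀ _ hη0.ne']
      ring
    calc ∑ u ∈ Finset.Ico v (k + 1), p u * (f v * (1 - η) ^ (u - v))
        = f v * ∑ u ∈ Finset.Ico v (k + 1), p u * (1 - η) ^ (u - v) := by
          rw [Finset.mul_sum]; refine Finset.sum_congr rfl fun u hu => by ring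
      _ = f v * ((1 + η * (1 - η) ^ (k - v)) / D) := by rw [hcoef]
      _ ≤ f v * ((1 + η) / D) := by
          have hp1 : (1 - η) ^ (k - v) ≤ 1 := pow_le_one₀ hx0 hx1
          have : 1 + η * (1 - η) ^ (k - v) ≤ 1 + η := by nlinarith
          gcongr
  calc ∑ v ∈ Finset.range (k + 1), ∑ u ∈ Finset.Ico v (k + 1),
        p u * (f v * (1 - η) ^ (u - v))
      ≤ ∑ v ∈ Finset.range (k + 1), f v * ((1 + η) / D) := Finset.sum_le_sum hbound
    _ = (∑ v ∈ Finset.range (k + 1), f v) * ((1 + η) / D) := by rw [← Finset.sum_mul]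
    _ ≤ 1 * ((1 + η) / D) := by
        apply mul_le_mul_of_nonneg_right hf1 (by positivity)
    _ = (1 + η) / D := one_mul _
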